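/- Let ν be a lattice path and δ an increment vector for ν. A subset T ⊆ L_{δ,ν} is a (δ,ν)-tree if and only if T is a ν̌-tree contained in L_{δ,ν}. In particular, every (δ,ν)-tree has exactly m + n + 1 elements. -/

import Mathlib

/-!
Common definitions for the paper "The alt ν-Tamari lattices".

A lattice path ν from (0,0) to (m,n) is encoded as the list (ν_0, ..., ν_n)
of its east-step block lengths (ν_0 initial east steps, ν_i the east steps
immediately following the i-th north step).  Thus `ν.length = n + 1` and
`ν.sum = m`.
-/

/-- `μ` is a ν-path: same endpoints as `ν` and weakly above `ν`. -/
def IsNuPath (ν μ : List ℕ) : Prop :=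
  μ.length = ν.length ∧ (∀ j : ℕ, (μ.take j).sum ≤ (ν.take j).sum) ∧ μ.sum = ν.sum

/-! ### The ν-Dyck lattice -/

/-- The Dyck order: `P ≤ Q` iff `Q` lies weakly above `P`. -/
def dyckLE (P Q : List ℕ) : Prop := ∀ j : ℕ, (Q.take j).sum ≤ (P.take j).sum

/-- Covering relation of the ν-Dyck lattice. -/
def dyckCovBy (ν P Q : List ℕ) : Prop :=
  IsNuPath ν P ∧ IsNuPath ν Q ∧ dyckLE P Q ∧ P ≠ Q ∧
    ∀ R, IsNuPath ν R → dyckLE P R → dyckLE R Q → R = P ∨ R = Q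

/-- `[P,Q]` is a linear interval of length `ℓ` in the ν-Dyck lattice:
the interval is totally ordered and there is a maximal chain of length `ℓ`
from `P` to `Q`. -/
def IsDyckLinear (ν P Q : List ℕ) (ℓ : ℕ) : Prop :=
  IsNuPath ν P ∧ IsNuPath ν Q ∧ dyckLE P Q ∧
  (∀ R S, IsNuPath ν R → IsNuPath ν S → dyckLE P R → dyckLE R Q →
    dyckLE P S → dyckLE S Q → dyckLE R S ∨ dyckLE S R) ∧
  ∃ c : ℕ → List ℕ, c 0 = P ∧ c ℓ = Q ∧ ∀ k, k < ℓ → dyckCovBy ν (c k) (c (k + 1))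

/-- `[P,Q]` is a left interval in the ν-Dyck lattice: `Q` is obtained from `P`
by replacing a consecutive subword `E^ℓ N` by `N E^ℓ` (the `ℓ` east steps are
moved from the block before the `(i+1)`-st north step to the block after it). -/
def IsLeftDyck (ν P Q : List ℕ) (ℓ : ℕ) : Prop :=
  IsNuPath ν P ∧ IsNuPath ν Q ∧ 1 ≤ ℓ ∧
  ∃ i, i + 1 < P.length ∧ ℓ ≤ P.getD i 0 ∧
    Q = (P.set i (P.getD i 0 - ℓ)).set (i + 1) (P.getD (i + 1) 0 + ℓ)

/-- `[P,Q]` is a right interval in the ν-Dyck lattice: `Q` is obtained from `P`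
by replacing a consecutive subword `E N^ℓ` by `N^ℓ E`. -/
def IsRightDyck (ν P Q : List ℕ) (ℓ : ℕ) : Prop :=
  IsNuPath ν P ∧ IsNuPath ν Q ∧ 1 ≤ ℓ ∧
  ∃ i, i + ℓ < P.length ∧ 1 ≤ P.getD i 0 ∧ (∀ j, i < j → j < i + ℓ → P.getD j 0 = 0) ∧
    Q = (P.set i (P.getD i 0 - 1)).set (i + ℓ) (P.getD (i + ℓ) 0 + 1)

/-! ### Increment vectors, δ-rotations and alt ν-Tamari posets -/

/-- `δ = (δ_1, …, δ_n)` is an increment vector with respect to `ν`: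
`δ_i ≤ ν_i` for `1 ≤ i ≤ n`.  (List index `i` of `δ` holds `δ_{i+1}`.) -/
def IsIncrement (ν δ : List ℕ) : Prop :=
  δ.length + 1 = ν.length ∧ ∀ i, i < δ.length → δ.getD i 0 ≤ ν.getD (i + 1) 0

/-- `μ'` is the δ-rotation of `μ` at the valley preceding the `(i+1)`-st north
step.  The δ-excursion starting with the `(i+1)`-st north step ends in block `k`
(the first block where the δ-altitude returns to its value at the valley), and
the east step of the valley is exchanged with this excursion, i.e. moved from
block `i` to block `k`. -/
def IsDeltaRotation (δ μ μ' : List ℕ) (i : ℕ) : Prop :=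
  i + 1 < μ.length ∧ 1 ≤ μ.getD i 0 ∧
  ∃ k, i < k ∧ k < μ.length ∧
    (∑ t ∈ Finset.Ico i k, δ.getD t 0) ≤ (∑ t ∈ Finset.Ico (i + 1) (k + 1), μ.getD t 0) ∧
    (∀ k', i < k' → k' < k →
      (∑ t ∈ Finset.Ico (i + 1) (k' + 1), μ.getD t 0) < (∑ t ∈ Finset.Ico i k', δ.getD t 0)) ∧
    μ' = (μ.set i (μ.getD i 0 - 1)).set k (μ.getD k 0 + 1)

/-- `Q` is obtained from `P` by a δ-rotation at some valley. -/
def DRot (δ P Q : List ℕ) : Prop := ∃ i, IsDeltaRotation δ P Q i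

/-- The alt ν-Tamari order: reflexive transitive closure of δ-rotations. -/
def altLE (δ : List ℕ) : List ℕ → List ℕ → Prop := Relation.ReflTransGen (DRot δ)

/-- The path ν̌ = (ν̌_0, δ_1, …, δ_n) with ν̌_0 = Σν_i − Σδ_i. -/
def nuCheck (ν δ : List ℕ) : List ℕ := (ν.sum - δ.sum) :: δ

/-- `μ'` is the ω-rotation (in the sense of the ν-Tamari lattice, defined via
the ω-altitude `alt_ω(x,y) = ω_0 + ⋯ + ω_y − x`) of `μ` at the valley preceding
the `(i+1)`-st north step: the east step of the valley is exchanged with the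
subpath from the valley to the next lattice point of the same ω-altitude,
which ends in block `k`. -/
def IsNuRotation (ω μ μ' : List ℕ) (i : ℕ) : Prop :=
  i + 1 < μ.length ∧ 1 ≤ μ.getD i 0 ∧
  ∃ k, i < k ∧ k < μ.length ∧
    (ω.take (k + 1)).sum + (μ.take (i + 1)).sum ≤
      (ω.take (i + 1)).sum + (μ.take (k + 1)).sum ∧
    (∀ k', i < k' → k' < k →
      (ω.take (i + 1)).sum + (μ.take (k' + 1)).sum <
        (ω.take (k' + 1)).sum + (μ.take (i + 1)).sum) ∧
    μ' = (μ.set i (μ.getD i 0 - 1)).set k (μ.getD k 0 + 1)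

/-- The ω-Tamari order on ω-paths: closure of ω-rotations. -/
def tamLE (ω : List ℕ) : List ℕ → List ℕ → Prop :=
  Relation.ReflTransGen (fun P Q => ∃ i, IsNuRotation ω P Q i)

/-- Covering relation of the alt ν-Tamari poset `T_ν(δ)`. -/
def altCovBy (ν δ P Q : List ℕ) : Prop :=
  IsNuPath ν P ∧ IsNuPath ν Q ∧ altLE δ P Q ∧ P ≠ Q ∧
    ∀ R, IsNuPath ν R → altLE δ P R → altLE δ R Q → R = P ∨ R = Q

/-- `[P,Q]` is a linear interval of length `ℓ` in the alt ν-Tamari poset. -/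
def IsAltLinear (ν δ P Q : List ℕ) (ℓ : ℕ) : Prop :=
  IsNuPath ν P ∧ IsNuPath ν Q ∧ altLE δ P Q ∧
  (∀ R S, IsNuPath ν R → IsNuPath ν S → altLE δ P R → altLE δ R Q →
    altLE δ P S → altLE δ S Q → altLE δ R S ∨ altLE δ S R) ∧
  ∃ c : ℕ → List ℕ, c 0 = P ∧ c ℓ = Q ∧ ∀ k, k < ℓ → altCovBy ν δ (c k) (c (k + 1))

/-! ### ω-trees -/

/-- The lattice points of the Ferrers diagram `F_ω` weakly above `ω`:
points `(x,y)` with `0 ≤ y ≤ n` and `x ≤ ω_0 + ⋯ + ω_y`. -/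
def Lpts (ω : List ℕ) : Set (ℕ × ℕ) :=
  {p : ℕ × ℕ | p.2 < ω.length ∧ p.1 ≤ (ω.take (p.2 + 1)).sum}

/-- `p` and `q` are ω-incompatible: one is strictly southwest of the other and
the smallest rectangle containing them lies in `F_ω` (equivalently, its
bottom-right corner is a lattice point of `F_ω`). -/
def Incomp (ω : List ℕ) (p q : ℕ × ℕ) : Prop :=
  ((p.1 < q.1 ∧ p.2 < q.2) ∨ (q.1 < p.1 ∧ q.2 < p.2)) ∧
    (max p.1 q.1, min p.2 q.2) ∈ Lpts ω

/-- All elements of `T` are pairwise ω-compatible. -/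
def PairwiseCompat (ω : List ℕ) (T : Set (ℕ × ℕ)) : Prop :=
  ∀ p ∈ T, ∀ q ∈ T, ¬ Incomp ω p q

/-- An ω-tree: a maximal collection of pairwise ω-compatible points of `L_ω`. -/
def IsTree (ω : List ℕ) (T : Set (ℕ × ℕ)) : Prop :=
  T ⊆ Lpts ω ∧ PairwiseCompat ω T ∧
    ∀ T', T ⊆ T' → T' ⊆ Lpts ω → PairwiseCompat ω T' → T' = T

/-- The ω-rotation of `T` at `q`: there are `p, r ∈ T` with `q` the lower-left
corner of the rectangle `p□r` (so `p` is above `q` in its column and `r` to the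
right of `q` in its row), no other element of `T` lies in `p□r`, and `T'` is
obtained by replacing `q` by the upper-right corner of `p□r`. -/
def RotationAt (ω : List ℕ) (T : Set (ℕ × ℕ)) (q : ℕ × ℕ) (T' : Set (ℕ × ℕ)) : Prop :=
  ∃ p r, p ∈ T ∧ q ∈ T ∧ r ∈ T ∧ p.1 = q.1 ∧ q.2 < p.2 ∧ r.2 = q.2 ∧ q.1 < r.1 ∧
    (∀ s ∈ T, q.1 ≤ s.1 → s.1 ≤ r.1 → q.2 ≤ s.2 → s.2 ≤ p.2 → s = p ∨ s = q ∨ s = r) ∧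
    T' = insert (r.1, p.2) (T \ {q})

/-- `T'` is obtained from `T` by an ω-rotation. -/
def TreeRotation (ω : List ℕ) (T T' : Set (ℕ × ℕ)) : Prop := ∃ q, RotationAt ω T q T'

/-- One rotation step between ω-trees. -/
def tRot (ω : List ℕ) (T T' : Set (ℕ × ℕ)) : Prop :=
  IsTree ω T ∧ IsTree ω T' ∧ TreeRotation ω T T'

/-- The rotation order on ω-trees. -/
def treeLE (ω : List ℕ) : Set (ℕ × ℕ) → Set (ℕ × ℕ) → Prop :=
  Relation.ReflTransGen (tRot ω)

/-- Covering relation of the rotation poset of ω-trees. -/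
def treeCovBy (ω : List ℕ) (T T' : Set (ℕ × ℕ)) : Prop :=
  IsTree ω T ∧ IsTree ω T' ∧ treeLE ω T T' ∧ T ≠ T' ∧
    ∀ R, IsTree ω R → treeLE ω T R → treeLE ω R T' → R = T ∨ R = T'

/-- `[T,T']` is a linear interval of length `ℓ` in the rotation poset of ω-trees. -/
def IsTreeLinear (ω : List ℕ) (T T' : Set (ℕ × ℕ)) (ℓ : ℕ) : Prop :=
  IsTree ω T ∧ IsTree ω T' ∧ treeLE ω T T' ∧
  (∀ R S, IsTree ω R → IsTree ω S → treeLE ω T R → treeLE ω R T' →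
    treeLE ω T S → treeLE ω S T' → treeLE ω R S ∨ treeLE ω S R) ∧
  ∃ c : ℕ → Set (ℕ × ℕ), c 0 = T ∧ c ℓ = T' ∧ ∀ k, k < ℓ → treeCovBy ω (c k) (c (k + 1))

/-- `q 0, …, q ℓ` is a sequence of consecutive nodes of `T` in the same row,
ordered from left to right. -/
def ConsecRow (T : Set (ℕ × ℕ)) (q : ℕ → ℕ × ℕ) (ℓ : ℕ) : Prop :=
  (∀ i, i ≤ ℓ → q i ∈ T) ∧ (∀ i, i ≤ ℓ → (q i).2 = (q 0).2) ∧
  (∀ i, i < ℓ → (q i).1 < (q (i + 1)).1) ∧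
  (∀ i, i < ℓ → ∀ s ∈ T, s.2 = (q 0).2 → (q i).1 < s.1 → s.1 < (q (i + 1)).1 → False)

/-- `q 0, …, q ℓ` is a sequence of consecutive nodes of `T` in the same column,
ordered from bottom to top. -/
def ConsecCol (T : Set (ℕ × ℕ)) (q : ℕ → ℕ × ℕ) (ℓ : ℕ) : Prop :=
  (∀ i, i ≤ ℓ → q i ∈ T) ∧ (∀ i, i ≤ ℓ → (q i).1 = (q 0).1) ∧
  (∀ i, i < ℓ → (q i).2 < (q (i + 1)).2) ∧
  (∀ i, i < ℓ → ∀ s ∈ T, s.1 = (q 0).1 → (q i).2 < s.2 → s.2 < (q (i + 1)).2 → False)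

/-- `[T,T']` is a left interval of length `ℓ` in the rotation poset of ω-trees:
`T'` is obtained from `T` by applying `ℓ > 0` successive rotations at the first
`ℓ` nodes of a sequence `q 0, …, q ℓ` of consecutive nodes of `T` in the same
row, from left to right. -/
def IsLeftTreeItv (ω : List ℕ) (T T' : Set (ℕ × ℕ)) (ℓ : ℕ) : Prop :=
  IsTree ω T ∧ 1 ≤ ℓ ∧
  ∃ q : ℕ → ℕ × ℕ, ConsecRow T q ℓ ∧
    ∃ c : ℕ → Set (ℕ × ℕ), c 0 = T ∧ c ℓ = T' ∧
      ∀ k, k < ℓ → RotationAt ω (c k) (q k) (c (k + 1))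

/-- `[T,T']` is a right interval of length `ℓ` in the rotation poset of ω-trees:
`T'` is obtained from `T` by applying `ℓ > 0` successive rotations at the first
`ℓ` nodes of a sequence `q 0, …, q ℓ` of consecutive nodes of `T` in the same
column, from bottom to top. -/
def IsRightTreeItv (ω : List ℕ) (T T' : Set (ℕ × ℕ)) (ℓ : ℕ) : Prop :=
  IsTree ω T ∧ 1 ≤ ℓ ∧
  ∃ q : ℕ → ℕ × ℕ, ConsecCol T q ℓ ∧
    ∃ c : ℕ → Set (ℕ × ℕ), c 0 = T ∧ c ℓ = T' ∧
      ∀ k, k < ℓ → RotationAt ω (c k) (q k) (c (k + 1))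

/-! ### (δ,ν)-trees -/

/-- The lattice points `L_{δ,ν}` of the shape `F_{δ,ν}`: points of `L_ν̌` lying
weakly above the path ν̂ = W^{ν_0} N W^{ν_1−δ_1} ⋯ N W^{ν_n−δ_n} starting at
`(ν̌_0, 0)`.  At height `y` these are the `x` with
`ν̌_0 − ν_0 − Σ_{i≤y}(ν_i−δ_i) ≤ x ≤ ν̌_0 + δ_1 + ⋯ + δ_y`, written here without
natural subtraction. -/
def Ldn (ν δ : List ℕ) : Set (ℕ × ℕ) :=
  {p : ℕ × ℕ | p.2 < ν.length ∧
    ν.sum ≤ p.1 + (ν.take (p.2 + 1)).sum + (δ.drop p.2).sum ∧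
    p.1 ≤ ((nuCheck ν δ).take (p.2 + 1)).sum}

/-- A (δ,ν)-tree: a maximal collection of pairwise ν̌-compatible points of `L_{δ,ν}`. -/
def IsDNTree (ν δ : List ℕ) (T : Set (ℕ × ℕ)) : Prop :=
  T ⊆ Ldn ν δ ∧ PairwiseCompat (nuCheck ν δ) T ∧
    ∀ T', T ⊆ T' → T' ⊆ Ldn ν δ → PairwiseCompat (nuCheck ν δ) T' → T' = T

/-- One ν̌-rotation step between (δ,ν)-trees. -/
def dnRot (ν δ : List ℕ) (T T' : Set (ℕ × ℕ)) : Prop :=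
  IsDNTree ν δ T ∧ IsDNTree ν δ T' ∧ TreeRotation (nuCheck ν δ) T T'

/-- The rotation order on (δ,ν)-trees. -/
def dnLE (ν δ : List ℕ) : Set (ℕ × ℕ) → Set (ℕ × ℕ) → Prop :=
  Relation.ReflTransGen (dnRot ν δ)

/-- Covering relation of the rotation poset of (δ,ν)-trees. -/
def dnCovBy (ν δ : List ℕ) (T T' : Set (ℕ × ℕ)) : Prop :=
  IsDNTree ν δ T ∧ IsDNTree ν δ T' ∧ dnLE ν δ T T' ∧ T ≠ T' ∧
    ∀ R, IsDNTree ν δ R → dnLE ν δ T R → dnLE ν δ R T' → R = T ∨ R = T'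

/-- `[T,T']` is a left interval of length `ℓ` in the rotation poset of (δ,ν)-trees. -/
def IsLeftDNItv (ν δ : List ℕ) (T T' : Set (ℕ × ℕ)) (ℓ : ℕ) : Prop :=
  IsDNTree ν δ T ∧ 1 ≤ ℓ ∧
  ∃ q : ℕ → ℕ × ℕ, ConsecRow T q ℓ ∧
    ∃ c : ℕ → Set (ℕ × ℕ), c 0 = T ∧ c ℓ = T' ∧
      ∀ k, k < ℓ → RotationAt (nuCheck ν δ) (c k) (q k) (c (k + 1))

/-- `[T,T']` is a right interval of length `ℓ` in the rotation poset of (δ,ν)-trees. -/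
def IsRightDNItv (ν δ : List ℕ) (T T' : Set (ℕ × ℕ)) (ℓ : ℕ) : Prop :=
  IsDNTree ν δ T ∧ 1 ≤ ℓ ∧
  ∃ q : ℕ → ℕ × ℕ, ConsecCol T q ℓ ∧
    ∃ c : ℕ → Set (ℕ × ℕ), c 0 = T ∧ c ℓ = T' ∧
      ∀ k, k < ℓ → RotationAt (nuCheck ν δ) (c k) (q k) (c (k + 1))

/-! ### Row vectors, column vectors, reduced column vectors -/

/-- Number of points of `T` at height `y`. -/
noncomputable def rowN (T : Set (ℕ × ℕ)) (y : ℕ) : ℕ := {p ∈ T | p.2 = y}.ncard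

/-- Number of points of `T` in column `x`. -/
noncomputable def colTN (T : Set (ℕ × ℕ)) (x : ℕ) : ℕ := {p ∈ T | p.1 = x}.ncard

/-- Number of points of `L_{δ,ν}` in column `x`. -/
noncomputable def colN (ν δ : List ℕ) (x : ℕ) : ℕ := {p ∈ Ldn ν δ | p.1 = x}.ncard

/-- `p` is a relevant point of `L_{δ,ν}`: it is not the leftmost point of its row. -/
def Relevant (ν δ : List ℕ) (p : ℕ × ℕ) : Prop :=
  p ∈ Ldn ν δ ∧ ∃ q ∈ Ldn ν δ, q.2 = p.2 ∧ q.1 < p.1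

/-- Number of relevant points of `L_{δ,ν}` in column `x` (the reduced column at `x`). -/
noncomputable def rcolN (ν δ : List ℕ) (x : ℕ) : ℕ := {p ∈ Ldn ν δ | p.1 = x ∧ Relevant ν δ p}.ncard

/-- Number of points of `T` in the reduced column at `x`. -/
noncomputable def rcolTN (ν δ : List ℕ) (T : Set (ℕ × ℕ)) (x : ℕ) : ℕ :=
  {p ∈ T | p.1 = x ∧ Relevant ν δ p}.ncard

/-- `j` lists the columns `j 0, …, j m` of `L_{δ,ν}` from shortest to longest,
reading from right to left among columns of equal length (here `m = ν.sum`). -/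
def ColOrder (ν δ : List ℕ) (j : ℕ → ℕ) : Prop :=
  (∀ i, i ≤ ν.sum → j i ≤ ν.sum) ∧
  (∀ i i', i ≤ ν.sum → i' ≤ ν.sum → j i = j i' → i = i') ∧
  (∀ i i', i < i' → i' ≤ ν.sum →
    colN ν δ (j i) < colN ν δ (j i') ∨ (colN ν δ (j i) = colN ν δ (j i') ∧ j i' < j i))

/-- `j` lists the reduced columns `j 0, …, j (m-1)` of `L_{δ,ν}` from shortest to
longest, reading from right to left among reduced columns of equal length. -/
def RColOrder (ν δ : List ℕ) (j : ℕ → ℕ) : Prop :=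
  (∀ i, i < ν.sum → 1 ≤ j i ∧ j i ≤ ν.sum) ∧
  (∀ i i', i < ν.sum → i' < ν.sum → j i = j i' → i = i') ∧
  (∀ i i', i < i' → i' < ν.sum →
    rcolN ν δ (j i) < rcolN ν δ (j i') ∨ (rcolN ν δ (j i) = rcolN ν δ (j i') ∧ j i' < j i))

/-- The entry `←ν_i` of the reversed path of `ν`: the number of north steps of
`ν` in column `m − i`. -/
def revNu (ν : List ℕ) (i : ℕ) : ℕ :=
  ((Finset.Ico 1 ν.length).filter (fun t => (ν.take t).sum + i = ν.sum)).card


/-! ### Auxiliary machinery for Statement 9 -/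


/-! Auxiliary abstract framework -/

def AInc (u : ℕ → ℕ) (p q : ℕ × ℕ) : Prop :=
  (p.1 < q.1 ∧ p.2 < q.2 ∧ q.1 ≤ u p.2) ∨ (q.1 < p.1 ∧ q.2 < p.2 ∧ p.1 ≤ u q.2)

def AReg (n : ℕ) (l u : ℕ → ℕ) : Set (ℕ × ℕ) :=
  {p | p.2 ≤ n ∧ l p.2 ≤ p.1 ∧ p.1 ≤ u p.2}

def ACompat (u : ℕ → ℕ) (T : Set (ℕ × ℕ)) : Prop :=
  ∀ p ∈ T, ∀ q ∈ T, ¬ AInc u p q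

def AMaxl (n : ℕ) (l u : ℕ → ℕ) (T : Set (ℕ × ℕ)) : Prop :=
  T ⊆ AReg n l u ∧ ACompat u T ∧
    ∀ T', T ⊆ T' → T' ⊆ AReg n l u → ACompat u T' → T' = T

lemma areg_finite (n : ℕ) (l u : ℕ → ℕ) : (AReg n l u).Finite := by
  apply Set.Finite.subset ((Set.finite_Iic ((Finset.range (n+1)).sup u)).prod (Set.finite_Iic n))
  rintro ⟨x, y⟩ ⟨hy, _, hx⟩
  exact ⟨le_trans hx (Finset.le_sup (by simp [Nat.lt_succ_iff, hy])), hy⟩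

lemma exists_amaxl (n : ℕ) (l u : ℕ → ℕ) (C : Set (ℕ × ℕ)) (hC : C ⊆ AReg n l u)
    (hc : ACompat u C) : ∃ T, C ⊆ T ∧ AMaxl n l u T := by
  have hside : ∀ c ⊆ {X | X ⊆ AReg n l u ∧ ACompat u X}, IsChain (· ⊆ ·) c → c.Nonempty →
      ∃ ub ∈ {X | X ⊆ AReg n l u ∧ ACompat u X}, ∀ s ∈ c, s ⊆ ub := by
    intro c hcS hchain hcne
    refine ⟨⋃₀ c, ⟨Set.sUnion_subset fun s hs => (hcS hs).1, ?_⟩,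
      fun s hs => Set.subset_sUnion_of_mem hs⟩
    rintro p ⟨X, hX, hpX⟩ q ⟨Y, hY, hqY⟩
    rcases hchain.total hX hY with h | h
    · exact (hcS hY).2 p (h hpX) q hqY
    · exact (hcS hX).2 p hpX q (h hqY)
  obtain ⟨m, hm1, hm2⟩ := zorn_subset_nonempty {X | X ⊆ AReg n l u ∧ ACompat u X} hside C ⟨hC, hc⟩
  refine ⟨m, hm1, hm2.prop.1, hm2.prop.2, fun T' hsub hreg hcomp => ?_⟩
  exact subset_antisymm (hm2.2 ⟨hreg, hcomp⟩ hsub) hsub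

lemma mono_of_step {f : ℕ → ℕ} {n : ℕ} (h : ∀ y, y < n → f y ≤ f (y+1)) :
    ∀ a b, a ≤ b → b ≤ n → f a ≤ f b := by
  intro a b
  induction b with
  | zero => intro hab _; obtain rfl := Nat.le_zero.mp hab; exact le_rfl
  | succ b ihb =>
    intro hab hbn
    rcases Nat.lt_or_ge a (b+1) with hlt | hge
    · exact le_trans (ihb (by omega) (by omega)) (h b (by omega))
    · have : a = b + 1 := by omega
      subst this; exact le_rfl

lemma anti_of_step {f : ℕ → ℕ} {n : ℕ} (h : ∀ y, y < n → f (y+1) ≤ f y) :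
    ∀ a b, a ≤ b → b ≤ n → f b ≤ f a := by
  intro a b
  induction b with
  | zero => intro hab _; obtain rfl := Nat.le_zero.mp hab; exact le_rfl
  | succ b ihb =>
    intro hab hbn
    rcases Nat.lt_or_ge a (b+1) with hlt | hge
    · exact le_trans (h b (by omega)) (ihb (by omega) (by omega))
    · have : a = b + 1 := by omega
      subst this; exact le_rfl


lemma ainc_mk {u : ℕ → ℕ} {x1 y1 x2 y2 : ℕ} :
    AInc u (x1, y1) (x2, y2) ↔
      ((x1 < x2 ∧ y1 < y2 ∧ x2 ≤ u y1) ∨ (x2 < x1 ∧ y2 < y1 ∧ x1 ≤ u y2)) := Iff.rfl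

lemma mem_areg {n : ℕ} {l u : ℕ → ℕ} {x y : ℕ} :
    (x, y) ∈ AReg n l u ↔ (y ≤ n ∧ l y ≤ x ∧ x ≤ u y) := Iff.rfl

theorem acount : ∀ (n : ℕ) (l u : ℕ → ℕ),
    (∀ y, y < n → u y ≤ u (y+1)) →
    (∀ y, y < n → l (y+1) ≤ l y) →
    (∀ y, y ≤ n → l y ≤ u y) →
    ∀ T : Set (ℕ × ℕ), AMaxl n l u T → T.ncard = n + 1 + (u n - l n) := by
  intro n
  induction n with
  | zero =>
    intro l u _ _ hlu T hT
    obtain ⟨hsub, hcomp, hmax⟩ := hT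
    have hTeq : AReg 0 l u = T := by
      apply hmax _ hsub subset_rfl
      rintro p hp q hq (⟨_, h2, _⟩ | ⟨_, h2, _⟩)
      · exact absurd hq.1 (by omega)
      · exact absurd hp.1 (by omega)
    have himg : AReg 0 l u = (fun x => (x, (0:ℕ))) '' Set.Icc (l 0) (u 0) := by
      ext ⟨x, y⟩
      simp only [AReg, Set.mem_setOf_eq, Set.mem_image, Set.mem_Icc, Prod.mk.injEq]
      constructor
      · rintro ⟨h1, h2, h3⟩
        have : y = 0 := by omega
        subst this
        exact ⟨x, ⟨h2, h3⟩, rfl, rfl⟩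
      · rintro ⟨a, ⟨h1, h2⟩, rfl, rfl⟩
        exact ⟨le_rfl, h1, h2⟩
    have hinj : Set.InjOn (fun x => (x, (0:ℕ))) (Set.Icc (l 0) (u 0)) := by
      intro a _ b _ h
      simpa using h
    have hlu0 := hlu 0 le_rfl
    rw [← hTeq, himg, Set.ncard_image_of_injOn hinj, ← Finset.coe_Icc,
      Set.ncard_coe_finset, Nat.card_Icc]
    omega
  | succ n ih =>
    intro l u hu hl hlu T hT
    obtain ⟨hsub, hcomp, hmax⟩ := hT
    have humono : ∀ a b, a ≤ b → b ≤ n + 1 → u a ≤ u b := mono_of_step hu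
    have hlanti : ∀ a b, a ≤ b → b ≤ n + 1 → l b ≤ l a := anti_of_step hl
    have hfin : T.Finite := (areg_finite _ _ _).subset hsub
    have hu0 : l 0 ≤ u 0 := hlu 0 (by omega)
    -- the threshold M
    set S0 : Set ℕ := insert (l 0) (Prod.fst '' {p ∈ T | 1 ≤ p.2 ∧ p.1 ≤ u 0}) with hS0def
    have hS0ne : S0.Nonempty := ⟨l 0, Set.mem_insert _ _⟩
    have hS0bdd : BddAbove S0 := by
      refine ⟨u 0, ?_⟩
      rintro x (rfl | ⟨p, ⟨_, _, hp3⟩, rfl⟩)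
      · exact hu0
      · exact hp3
    set M := sSup S0 with hMdef
    have hMmem : M ∈ S0 := Nat.sSup_mem hS0ne hS0bdd
    have hMl0 : l 0 ≤ M := le_csSup hS0bdd (Set.mem_insert _ _)
    have hMu0 : M ≤ u 0 := by
      rcases Set.mem_insert_iff.mp hMmem with h | ⟨p, ⟨_, _, hp3⟩, h⟩
      · rw [h]; exact hu0
      · rw [← h]; exact hp3
    have hBle : ∀ x y, (x, y) ∈ T → 1 ≤ y → x ≤ u 0 → x ≤ M := by
      intro x y h1 h2 h3
      exact le_csSup hS0bdd (Set.mem_insert_iff.mpr (Or.inr ⟨(x, y), ⟨h1, h2, h3⟩, rfl⟩))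
    -- row 0 of T is exactly [M, u 0] × {0}
    have hrow0 : ∀ x, M ≤ x → x ≤ u 0 → (x, 0) ∈ T := by
      intro x hMx hxu
      have h1 : insert ((x : ℕ), (0 : ℕ)) T = T := by
        apply hmax _ (Set.subset_insert _ _)
        · rintro p (rfl | hp)
          · exact mem_areg.mpr ⟨by omega, by omega, hxu⟩
          · exact hsub hp
        · rintro ⟨a, b⟩ hp ⟨c, d⟩ hq hinc
          rw [ainc_mk] at hinc
          rcases Set.mem_insert_iff.mp hp with heq1 | hpT
          · rcases Set.mem_insert_iff.mp hq with heq2 | hqT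
            · rw [Prod.mk.injEq] at heq1 heq2; omega
            · rw [Prod.mk.injEq] at heq1
              obtain ⟨rfl, rfl⟩ := heq1
              rcases hinc with ⟨h1, h2, h3⟩ | ⟨h1, h2, h3⟩
              · have := hBle c d hqT (by omega) h3; omega
              · omega
          · rcases Set.mem_insert_iff.mp hq with heq2 | hqT
            · rw [Prod.mk.injEq] at heq2
              obtain ⟨rfl, rfl⟩ := heq2
              rcases hinc with ⟨h1, h2, h3⟩ | ⟨h1, h2, h3⟩
              · omega
              · have := hBle a b hpT (by omega) h3; omega
            · exact hcomp _ hpT _ hqT (ainc_mk.mpr hinc)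
      rw [← h1]; exact Set.mem_insert _ _
    have hrow0' : ∀ x y, (x, y) ∈ T → y = 0 → M ≤ x ∧ x ≤ u 0 := by
      intro x y hp hp0
      subst hp0
      obtain ⟨_, h2, h3⟩ := mem_areg.mp (hsub hp)
      refine ⟨?_, h3⟩
      rcases Set.mem_insert_iff.mp hMmem with h | ⟨⟨sx, sy⟩, ⟨hs1, hs2, hs3⟩, h⟩
      · omega
      · by_contra hlt
        refine hcomp _ hp _ hs1 (ainc_mk.mpr (Or.inl ⟨by simp at h; omega, by omega, ?_⟩))
        simp only at h hs3
        omega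
    set g := u 0 - M with hgdef
    set Tp : Set (ℕ × ℕ) := {p ∈ T | 1 ≤ p.2} with hTpdef
    have hAl : ∀ x y, (x, y) ∈ Tp → x ≤ M ∨ u 0 < x := by
      rintro x y ⟨hp, hp2⟩
      rcases le_or_gt x (u 0) with h | h
      · exact Or.inl (hBle x y hp hp2 h)
      · exact Or.inr h
    -- the transport maps
    set Φ : ℕ × ℕ → ℕ × ℕ := fun p => (if p.1 ≤ M then p.1 else p.1 - g, p.2 - 1) with hΦdef
    set Ψ : ℕ × ℕ → ℕ × ℕ := fun p => (if p.1 ≤ M then p.1 else p.1 + g, p.2 + 1) with hΨdef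
    set l' : ℕ → ℕ := fun y => l (y + 1) with hl'def
    set u' : ℕ → ℕ := fun y => u (y + 1) - g with hu'def
    set T' : Set (ℕ × ℕ) := Φ '' Tp with hT'def
    have hΦc : ∀ x y : ℕ, Φ (x, y) = (if x ≤ M then x else x - g, y - 1) := fun _ _ => rfl
    have hΨc : ∀ x y : ℕ, Ψ (x, y) = (if x ≤ M then x else x + g, y + 1) := fun _ _ => rfl
    have hΨΦ : ∀ x y, (x, y) ∈ Tp → Ψ (Φ (x, y)) = (x, y) := by
      intro x y hp
      have hal := hAl x y hp
      have h2 := hp.2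
      rw [hΦc, hΨc, Prod.mk.injEq]
      constructor
      · split_ifs <;> omega
      · simp only at h2; omega
    have hΦΨ : ∀ x y : ℕ, Φ (Ψ (x, y)) = (x, y) := by
      intro x y
      rw [hΨc, hΦc, Prod.mk.injEq]
      constructor
      · split_ifs <;> omega
      · omega
    -- T' is a maximal compatible set for the smaller region
    have hT'reg : T' ⊆ AReg n l' u' := by
      rintro _ ⟨⟨x, y⟩, hp, rfl⟩
      have hal := hAl x y hp
      have h2 : 1 ≤ y := hp.2
      obtain ⟨hr1, hr2, hr3⟩ := mem_areg.mp (hsub hp.1)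
      have hy : y - 1 + 1 = y := by omega
      have hup : u 0 ≤ u y := humono 0 y (by omega) hr1
      have hlp : l y ≤ l 0 := hlanti 0 y (by omega) hr1
      rw [hΦc, mem_areg, hl'def, hu'def]
      refine ⟨by omega, ?_, ?_⟩ <;> simp only [hy] <;> split_ifs <;> omega
    have hT'comp : ACompat u' T' := by
      rintro _ ⟨⟨x1, y1⟩, hp, rfl⟩ _ ⟨⟨x2, y2⟩, hq, rfl⟩ hinc
      have hal1 := hAl x1 y1 hp
      have hal2 := hAl x2 y2 hq
      have h1 : 1 ≤ y1 := hp.2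
      have h2 : 1 ≤ y2 := hq.2
      obtain ⟨hr1, _, hr3⟩ := mem_areg.mp (hsub hp.1)
      obtain ⟨hs1, _, hs3⟩ := mem_areg.mp (hsub hq.1)
      have hup : u 0 ≤ u y1 := humono 0 y1 (by omega) hr1
      have huq : u 0 ≤ u y2 := humono 0 y2 (by omega) hs1
      apply hcomp _ hp.1 _ hq.1
      rw [ainc_mk]
      rw [hΦc, hΦc, ainc_mk, hu'def] at hinc
      have hy1 : y1 - 1 + 1 = y1 := by omega
      have hy2 : y2 - 1 + 1 = y2 := by omega
      simp only [hy1, hy2] at hinc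
      split_ifs at hinc <;> omega
    have hT'max : ∀ W, T' ⊆ W → W ⊆ AReg n l' u' → ACompat u' W → W = T' := by
      intro W hTW hWreg hWcomp
      have hV : (Ψ '' W) ∪ {p ∈ T | p.2 = 0} = T := by
        apply hmax
        · -- T ⊆ V
          rintro ⟨x, y⟩ hp
          rcases Nat.eq_zero_or_pos y with h0 | h1
          · exact Or.inr ⟨hp, h0⟩
          · exact Or.inl ⟨Φ (x, y), hTW ⟨(x, y), ⟨hp, h1⟩, rfl⟩, hΨΦ x y ⟨hp, h1⟩⟩
        · -- V ⊆ AReg (n+1) l u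
          rintro _ (⟨⟨x, y⟩, hw, rfl⟩ | ⟨hp, _⟩)
          · obtain ⟨hr1, hr2, hr3⟩ := mem_areg.mp (hWreg hw)
            simp only [hl'def] at hr2
            simp only [hu'def] at hr3
            have hup : u 0 ≤ u (y + 1) := humono 0 (y + 1) (by omega) (by omega)
            rw [hΨc, mem_areg]
            refine ⟨by omega, by split_ifs <;> omega, by split_ifs <;> omega⟩
          · exact hsub hp
        · -- ACompat u V
          intro p hp q hq hinc
          obtain ⟨a, b⟩ := p
          obtain ⟨c, d⟩ := q
          rw [ainc_mk] at hinc
          rcases hp with ⟨⟨x1, y1⟩, hw1, heq1⟩ | ⟨hp1, hp10⟩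
          · obtain ⟨hr1, hr2, hr3⟩ := mem_areg.mp (hWreg hw1)
            simp only [hl'def] at hr2
            simp only [hu'def] at hr3
            have hup : u 0 ≤ u (y1 + 1) := humono 0 (y1 + 1) (by omega) (by omega)
            rw [hΨc, Prod.mk.injEq] at heq1
            obtain ⟨h1a, h1b⟩ := heq1
            subst h1b
            rcases hq with ⟨⟨x2, y2⟩, hw2, heq2⟩ | ⟨hq1, hq2⟩
            · obtain ⟨hs1, hs2, hs3⟩ := mem_areg.mp (hWreg hw2)
              simp only [hl'def] at hs2
              simp only [hu'def] at hs3
              have huq : u 0 ≤ u (y2 + 1) := humono 0 (y2 + 1) (by omega) (by omega)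
              rw [hΨc, Prod.mk.injEq] at heq2
              obtain ⟨h2a, h2b⟩ := heq2
              subst h2b
              refine hWcomp _ hw1 _ hw2 ?_
              rw [ainc_mk]
              simp only [hu'def]
              split_ifs at h1a h2a <;> omega
            · have hd : d = 0 := hq2
              subst hd
              have hcb := hrow0' c 0 hq1 rfl
              split_ifs at h1a <;> omega
          · have hb : b = 0 := hp10
            subst hb
            have hab := hrow0' a 0 hp1 rfl
            rcases hq with ⟨⟨x2, y2⟩, hw2, heq2⟩ | ⟨hq1, hq2⟩
            · obtain ⟨hs1, hs2, hs3⟩ := mem_areg.mp (hWreg hw2)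
              simp only [hl'def] at hs2
              simp only [hu'def] at hs3
              have huq : u 0 ≤ u (y2 + 1) := humono 0 (y2 + 1) (by omega) (by omega)
              rw [hΨc, Prod.mk.injEq] at heq2
              obtain ⟨h2a, h2b⟩ := heq2
              subst h2b
              split_ifs at h2a <;> omega
            · have hd : d = 0 := hq2
              omega
      apply subset_antisymm _ hTW
      rintro ⟨x, y⟩ hw
      have hΨmem : Ψ (x, y) ∈ T := by
        rw [← hV]; exact Or.inl ⟨(x, y), hw, rfl⟩
      have hTpmem : Ψ (x, y) ∈ Tp := ⟨hΨmem, by rw [hΨc]; show (1 : ℕ) ≤ y + 1; omega⟩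
      have hmem : Φ (Ψ (x, y)) ∈ T' := ⟨Ψ (x, y), hTpmem, rfl⟩
      rw [hΦΨ] at hmem
      exact hmem
    -- apply the induction hypothesis
    have hu' : ∀ y, y < n → u' y ≤ u' (y + 1) := by
      intro y hy
      simp only [hu'def]
      have := hu (y + 1) (by omega)
      omega
    have hl' : ∀ y, y < n → l' (y + 1) ≤ l' y := by
      intro y hy
      simp only [hl'def]
      exact hl (y + 1) (by omega)
    have hlu' : ∀ y, y ≤ n → l' y ≤ u' y := by
      intro y hy
      simp only [hl'def, hu'def]
      have h1 := hlanti 0 (y + 1) (by omega) (by omega)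
      have h2 := humono 0 (y + 1) (by omega) (by omega)
      omega
    have hcount' := ih l' u' hu' hl' hlu' T' ⟨hT'reg, hT'comp, hT'max⟩
    simp only [hl'def, hu'def] at hcount'
    -- counting
    have hsplit : T = {p ∈ T | p.2 = 0} ∪ Tp := by
      rw [hTpdef]
      ext ⟨x, y⟩
      simp only [Set.mem_union, Set.mem_setOf_eq]
      constructor
      · intro h
        rcases Nat.eq_zero_or_pos y with h0 | h1
        · exact Or.inl ⟨h, h0⟩
        · exact Or.inr ⟨h, h1⟩
      · rintro (⟨h, _⟩ | ⟨h, _⟩) <;> exact h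
    have hdisj : Disjoint {p ∈ T | p.2 = 0} Tp := by
      rw [Set.disjoint_left]
      rintro ⟨x, y⟩ ⟨_, h0⟩ ⟨_, h1⟩
      have h0' : y = 0 := h0
      have h1' : 1 ≤ y := h1
      omega
    have hcard : T.ncard = ({p ∈ T | p.2 = 0}).ncard + Tp.ncard := by
      calc T.ncard = ({p ∈ T | p.2 = 0} ∪ Tp).ncard := by rw [← hsplit]
        _ = _ := Set.ncard_union_eq hdisj (hfin.subset fun p hp => hp.1)
          (hfin.subset fun p hp => hp.1)
    have hrow0img : {p ∈ T | p.2 = 0} = (fun x => (x, (0 : ℕ))) '' Set.Icc M (u 0) := by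
      ext ⟨x, y⟩
      simp only [Set.mem_setOf_eq, Set.mem_image, Set.mem_Icc, Prod.mk.injEq]
      constructor
      · rintro ⟨h, h0⟩
        have h0' : y = 0 := h0
        subst h0'
        obtain ⟨hb1, hb2⟩ := hrow0' x 0 h rfl
        exact ⟨x, ⟨hb1, hb2⟩, rfl, rfl⟩
      · rintro ⟨a, ⟨ha1, ha2⟩, rfl, rfl⟩
        exact ⟨hrow0 a ha1 ha2, rfl⟩
    have hrow0card : ({p ∈ T | p.2 = 0}).ncard = u 0 + 1 - M := by
      rw [hrow0img, Set.ncard_image_of_injOn (by intro a _ b _ h; simpa using h),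
        ← Finset.coe_Icc, Set.ncard_coe_finset, Nat.card_Icc]
    have hΦinj : Set.InjOn Φ Tp := by
      rintro ⟨x1, y1⟩ hp ⟨x2, y2⟩ hq heq
      have hal1 := hAl x1 y1 hp
      have hal2 := hAl x2 y2 hq
      have h1 : 1 ≤ y1 := hp.2
      have h2 : 1 ≤ y2 := hq.2
      rw [hΦc, hΦc, Prod.mk.injEq] at heq
      obtain ⟨e1, e2⟩ := heq
      rw [Prod.mk.injEq]
      constructor
      · split_ifs at e1 <;> omega
      · omega
    have hTpcard : Tp.ncard = T'.ncard := by
      rw [hT'def, Set.ncard_image_of_injOn hΦinj]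
    have hup : u 0 ≤ u (n + 1) := humono 0 (n + 1) (by omega) le_rfl
    have hlp : l (n + 1) ≤ l 0 := hlanti 0 (n + 1) (by omega) le_rfl
    rw [hcard, hrow0card, hTpcard, hcount']
    omega


lemma sum_take_succ_getD (xs : List ℕ) (k : ℕ) :
    (xs.take (k + 1)).sum = (xs.take k).sum + xs.getD k 0 := by
  induction xs generalizing k with
  | nil => simp
  | cons x xs ihx =>
    cases k with
    | zero => simp
    | succ k =>
      simp only [List.take_succ_cons, List.sum_cons, List.getD_cons_succ, ihx k]
      omega

lemma sum_drop_getD (xs : List ℕ) (k : ℕ) :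
    (xs.drop k).sum = xs.getD k 0 + (xs.drop (k + 1)).sum := by
  induction xs generalizing k with
  | nil => simp
  | cons x xs ihx =>
    cases k with
    | zero => simp
    | succ k => simpa using ihx k

lemma sum_le_sum_getD (a : List ℕ) : ∀ b : List ℕ, a.length ≤ b.length →
    (∀ i, i < a.length → a.getD i 0 ≤ b.getD i 0) → a.sum ≤ b.sum := by
  induction a with
  | nil => intro b _ _; simp
  | cons x a iha =>
    intro b hlen h2
    cases b with
    | nil => simp at hlen
    | cons y b =>
      simp only [List.sum_cons]
      have h0 := h2 0 (by simp)
      simp only [List.getD_cons_zero] at h0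
      have := iha b (by simpa using hlen)
        (fun i hi => by simpa using h2 (i + 1) (by simpa using hi))
      omega

lemma delta_sum_le (ν δ : List ℕ) (hδ : IsIncrement ν δ) : δ.sum ≤ ν.sum := by
  obtain ⟨hlen, hinc⟩ := hδ
  cases ν with
  | nil => simp at hlen
  | cons v νs =>
    have h : δ.sum ≤ νs.sum := by
      apply sum_le_sum_getD _ _ (by simp at hlen; omega)
      intro i hi
      simpa using hinc i hi
    simp only [List.sum_cons]
    omega

lemma nuCheck_take_sum (ν δ : List ℕ) (y : ℕ) :
    ((nuCheck ν δ).take (y + 1)).sum = (ν.sum - δ.sum) + (δ.take y).sum := by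
  simp [nuCheck, List.take_succ_cons]


/-- A subset `T ⊆ L_{δ,ν}` is a (δ,ν)-tree if and only if it
is a ν̌-tree contained in `L_{δ,ν}`.  In particular, every (δ,ν)-tree has
exactly `m + n + 1` elements (here `m + n + 1 = ν.sum + ν.length`). -/
theorem dn_tree_iff_check_tree (ν δ : List ℕ) (hν : ν ≠ []) (hδ : IsIncrement ν δ) :
    (∀ T : Set (ℕ × ℕ), IsDNTree ν δ T ↔ (IsTree (nuCheck ν δ) T ∧ T ⊆ Ldn ν δ)) ∧
    (∀ T : Set (ℕ × ℕ), IsDNTree ν δ T → T.ncard = ν.sum + ν.length) := by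
  obtain ⟨hlen, hinc⟩ := hδ
  set n := δ.length with hn
  set l : ℕ → ℕ := fun y => ν.sum - ((ν.take (y + 1)).sum + (δ.drop y).sum) with hldef
  set u : ℕ → ℕ := fun y => ((nuCheck ν δ).take (y + 1)).sum with hudef
  have hδν : δ.sum ≤ ν.sum := delta_sum_le ν δ ⟨hlen, hinc⟩
  have hucomp : ∀ y, u y = (ν.sum - δ.sum) + (δ.take y).sum := fun y => nuCheck_take_sum ν δ y
  have hu : ∀ y, y < n → u y ≤ u (y + 1) := by
    intro y hy
    rw [hucomp, hucomp]
    have := sum_take_succ_getD δ y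
    omega
  have hl : ∀ y, y < n → l (y + 1) ≤ l y := by
    intro y hy
    simp only [hldef]
    have h1 := sum_take_succ_getD ν (y + 1)
    have h2 := sum_drop_getD δ y
    have h3 := hinc y hy
    omega
  have htdsum : ∀ y, (δ.take y).sum + (δ.drop y).sum = δ.sum := by
    intro y
    rw [← List.sum_append, List.take_append_drop]
  have hlu : ∀ y, y ≤ n → l y ≤ u y := by
    intro y hy
    rw [hucomp]
    simp only [hldef]
    have := htdsum y
    omega
  have hln : l n = 0 := by
    simp only [hldef]
    have h1 : ν.take (n + 1) = ν := List.take_of_length_le (by omega)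
    have h2 : δ.drop n = [] := List.drop_of_length_le (by omega)
    rw [h1, h2]
    simp
  have hun : u n = ν.sum := by
    rw [hucomp]
    have h : δ.take n = δ := List.take_of_length_le (by omega)
    rw [h]
    omega
  have hLdn : Ldn ν δ = AReg n l u := by
    ext ⟨x, y⟩
    simp only [Ldn, Set.mem_setOf_eq, mem_areg, hldef, hudef]
    constructor
    · rintro ⟨h1, h2, h3⟩
      exact ⟨by omega, by omega, h3⟩
    · rintro ⟨h1, h2, h3⟩
      exact ⟨by omega, by omega, h3⟩
  have hlen2 : (nuCheck ν δ).length = n + 1 := by simp [nuCheck, hn]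
  have hLpts : Lpts (nuCheck ν δ) = AReg n (fun _ => 0) u := by
    ext ⟨x, y⟩
    simp only [Lpts, Set.mem_setOf_eq, mem_areg, hudef]
    constructor
    · rintro ⟨h1, h2⟩
      exact ⟨by omega, by omega, h2⟩
    · rintro ⟨h1, _, h3⟩
      exact ⟨by omega, h3⟩
  have hIncomp : ∀ p q : ℕ × ℕ, p.2 ≤ n → q.2 ≤ n →
      (Incomp (nuCheck ν δ) p q ↔ AInc u p q) := by
    rintro ⟨x1, y1⟩ ⟨x2, y2⟩ h1 h2
    simp only [Incomp, Lpts, Set.mem_setOf_eq, AInc, hudef]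
    constructor
    · rintro ⟨hor, _, hmax⟩
      rcases hor with ⟨ha, hb⟩ | ⟨ha, hb⟩
      · have e1 : min y1 y2 = y1 := by omega
        have e2 : max x1 x2 = x2 := by omega
        rw [e1, e2] at hmax
        exact Or.inl ⟨ha, hb, hmax⟩
      · have e1 : min y1 y2 = y2 := by omega
        have e2 : max x1 x2 = x1 := by omega
        rw [e1, e2] at hmax
        exact Or.inr ⟨ha, hb, hmax⟩
    · rintro (⟨ha, hb, hc⟩ | ⟨ha, hb, hc⟩)
      · refine ⟨Or.inl ⟨ha, hb⟩, by omega, ?_⟩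
        have e1 : min y1 y2 = y1 := by omega
        have e2 : max x1 x2 = x2 := by omega
        rw [e1, e2]
        exact hc
      · refine ⟨Or.inr ⟨ha, hb⟩, by omega, ?_⟩
        have e1 : min y1 y2 = y2 := by omega
        have e2 : max x1 x2 = x1 := by omega
        rw [e1, e2]
        exact hc
  have hPC : ∀ T : Set (ℕ × ℕ), (∀ p ∈ T, p.2 ≤ n) →
      (PairwiseCompat (nuCheck ν δ) T ↔ ACompat u T) := by
    intro T hT
    constructor
    · intro h p hp q hq hainc
      exact h p hp q hq ((hIncomp p q (hT p hp) (hT q hq)).mpr hainc)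
    · intro h p hp q hq hincc
      exact h p hp q hq ((hIncomp p q (hT p hp) (hT q hq)).mp hincc)
  have hDN : ∀ T : Set (ℕ × ℕ), IsDNTree ν δ T ↔ AMaxl n l u T := by
    intro T
    constructor
    · rintro ⟨h1, h2, h3⟩
      have h1' : T ⊆ AReg n l u := hLdn ▸ h1
      refine ⟨h1', (hPC T (fun p hp => (h1' hp).1)).mp h2, ?_⟩
      intro T' hsub' hreg' hcomp'
      exact h3 T' hsub' (by rw [hLdn]; exact hreg')
        ((hPC T' (fun p hp => (hreg' hp).1)).mpr hcomp')
    · rintro ⟨h1, h2, h3⟩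
      refine ⟨by rw [hLdn]; exact h1, (hPC T (fun p hp => (h1 hp).1)).mpr h2, ?_⟩
      intro T' hsub' hreg' hcomp'
      have hreg'' : T' ⊆ AReg n l u := by rw [← hLdn]; exact hreg'
      exact h3 T' hsub' hreg'' ((hPC T' (fun p hp => (hreg'' hp).1)).mp hcomp')
  have hTree : ∀ T : Set (ℕ × ℕ), IsTree (nuCheck ν δ) T ↔ AMaxl n (fun _ => 0) u T := by
    intro T
    constructor
    · rintro ⟨h1, h2, h3⟩
      have h1' : T ⊆ AReg n (fun _ => 0) u := hLpts ▸ h1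
      refine ⟨h1', (hPC T (fun p hp => (h1' hp).1)).mp h2, ?_⟩
      intro T' hsub' hreg' hcomp'
      exact h3 T' hsub' (by rw [hLpts]; exact hreg')
        ((hPC T' (fun p hp => (hreg' hp).1)).mpr hcomp')
    · rintro ⟨h1, h2, h3⟩
      refine ⟨by rw [hLpts]; exact h1, (hPC T (fun p hp => (h1 hp).1)).mpr h2, ?_⟩
      intro T' hsub' hreg' hcomp'
      have hreg'' : T' ⊆ AReg n (fun _ => 0) u := by rw [← hLpts]; exact hreg'
      exact h3 T' hsub' hreg'' ((hPC T' (fun p hp => (hreg'' hp).1)).mp hcomp')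
  have hl0 : ∀ y, y < n → (fun _ : ℕ => (0 : ℕ)) (y + 1) ≤ (fun _ : ℕ => (0 : ℕ)) y :=
    fun _ _ => le_rfl
  have hlu0 : ∀ y, y ≤ n → (fun _ : ℕ => (0 : ℕ)) y ≤ u y := fun y _ => Nat.zero_le _
  have hsubreg : AReg n l u ⊆ AReg n (fun _ => 0) u :=
    fun p hp => ⟨hp.1, Nat.zero_le _, hp.2.2⟩
  have hcount : ∀ T : Set (ℕ × ℕ), IsDNTree ν δ T → T.ncard = n + 1 + ν.sum := by
    intro T hT
    have hAM := (hDN T).mp hT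
    rw [acount n l u hu hl hlu T hAM, hun, hln]
    omega
  refine ⟨fun T => ⟨?_, ?_⟩, fun T hT => ?_⟩
  · intro hT
    have hAM := (hDN T).mp hT
    refine ⟨(hTree T).mpr ⟨fun p hp => hsubreg (hAM.1 hp), hAM.2.1, ?_⟩, hT.1⟩
    intro T' hsub' hreg' hcomp'
    obtain ⟨T2, hsub2, hAM2⟩ := exists_amaxl n (fun _ => 0) u T' hreg' hcomp'
    have hc1 : T.ncard = n + 1 + ν.sum := hcount T hT
    have hc2 : T2.ncard = n + 1 + ν.sum := by
      rw [acount n (fun _ => 0) u hu hl0 hlu0 T2 hAM2, hun]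
      simp
    have hfin2 : T2.Finite := (areg_finite _ _ _).subset hAM2.1
    have hTeq : T = T2 :=
      Set.eq_of_subset_of_ncard_le (hsub'.trans hsub2) (by omega) hfin2
    exact subset_antisymm (hTeq ▸ hsub2) hsub'
  · rintro ⟨hTr, hsubL⟩
    apply (hDN T).mpr
    have hAM0 := (hTree T).mp hTr
    refine ⟨hLdn ▸ hsubL, hAM0.2.1, ?_⟩
    intro T' hsub' hreg' hcomp'
    exact hAM0.2.2 T' hsub' (fun p hp => hsubreg (hreg' hp)) hcomp'
  · have := hcount T hT
    have hlen3 : ν.length = n + 1 := by omega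
    omega
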